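/- Let C ≥ 0 and let (X,d) be a C-roughly geodesic metric space. Let 𝒬 be a cover of X by nonempty subsets, set D = 3·sup_{Q∈𝒬} diam(Q), and assume C < D < ∞. Form the graph with vertex set 𝒬 and an edge between distinct Q, Q′ whenever Q ∩ Q′ ≠ ∅, with graph metric d_𝒬 (each edge of length 1). Assume there is N ∈ ℕ such that whenever d(x,y) < D, any member of 𝒬 containing x and any member containing y are at graph distance at most N. Let f : X → 𝒬 be any map with x ∈ f(x) for all x. Then for all x, y ∈ X: d(x,y) ≤ (2D/3)·d_𝒬(f(x),f(y)) whenever f(x) ≠ f(y), and d_𝒬(f(x),f(y)) ≤ N·(d(x,y)/(D−C) + 1). In particular f is a surjective quasi-isometry from (X,d) onto the graph (𝒬, d_𝒬). -/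

import Mathlib

/-- `ξ` is a `C`-rough geodesic from `x` to `y`, defined on `[0, d(x,y)]`. -/
def IsRoughGeodBetween (C : ℝ) {X : Type*} [MetricSpace X] (ξ : ℝ → X) (x y : X) : Prop :=
  ξ 0 = x ∧ ξ (dist x y) = y ∧
  ∀ s ∈ Set.Icc (0 : ℝ) (dist x y), ∀ s' ∈ Set.Icc (0 : ℝ) (dist x y),
    |s - s'| - C ≤ dist (ξ s) (ξ s') ∧ dist (ξ s) (ξ s') ≤ |s - s'| + C

/-- The intersection graph of a cover `𝒬`: vertices are members of `𝒬`, and two distinct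
members are adjacent iff they intersect. -/
def coverGraph {X : Type*} (𝒬 : Set (Set X)) : SimpleGraph {Q // Q ∈ 𝒬} where
  Adj Q Q' := Q ≠ Q' ∧ (Q.val ∩ Q'.val).Nonempty
  symm := ⟨fun Q Q' h => ⟨h.1.symm, Set.inter_comm Q'.val Q.val ▸ h.2⟩⟩
  loopless := ⟨fun Q h => h.1 rfl⟩

lemma chain_dist {V : Type*} (G : SimpleGraph V) (g : ℕ → V) (N : ℕ) :
    ∀ n : ℕ, (∀ i < n, G.Reachable (g i) (g (i+1)) ∧ G.dist (g i) (g (i+1)) ≤ N) →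
      G.Reachable (g 0) (g n) ∧ G.dist (g 0) (g n) ≤ n * N := by
  intro n
  induction n with
  | zero => intro _; exact ⟨SimpleGraph.Reachable.refl _, by simp⟩
  | succ n ih =>
    intro h
    obtain ⟨hr, hd⟩ := ih (fun i hi => h i (Nat.lt_succ_of_lt hi))
    obtain ⟨hr', hd'⟩ := h n (Nat.lt_succ_self n)
    refine ⟨hr.trans hr', ?_⟩
    obtain ⟨p, hp⟩ := hr.exists_walk_length_eq_dist
    obtain ⟨q, hq⟩ := hr'.exists_walk_length_eq_dist
    calc G.dist (g 0) (g (n+1)) ≤ (p.append q).length := SimpleGraph.dist_le _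
      _ = G.dist (g 0) (g n) + G.dist (g n) (g (n+1)) := by
          rw [SimpleGraph.Walk.length_append, hp, hq]
      _ ≤ n * N + N := Nat.add_le_add hd hd'
      _ = (n+1) * N := by ring

lemma walk_dist {X : Type*} [MetricSpace X] (𝒬 : Set (Set X))
    (hbdd : ∀ Q ∈ 𝒬, Bornology.IsBounded Q) (hbdd2 : BddAbove (Metric.diam '' 𝒬))
    (D : ℝ) (hD : D = 3 * sSup (Metric.diam '' 𝒬)) :
    ∀ {Q Q' : {Q // Q ∈ 𝒬}} (p : (coverGraph 𝒬).Walk Q Q') (x : X), x ∈ Q.val →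
      ∀ y ∈ Q'.val, dist x y ≤ D / 3 * (p.length + 1) := by
  have hdiam : ∀ Q : {Q // Q ∈ 𝒬}, Metric.diam Q.val ≤ D / 3 := by
    intro Q
    rw [hD]
    have := le_csSup hbdd2 ⟨Q.val, Q.2, rfl⟩
    linarith
  intro Q Q' p
  induction p with
  | @nil Q =>
    intro x hx y hy
    have h1 : dist x y ≤ D / 3 :=
      le_trans (Metric.dist_le_diam_of_mem (hbdd _ Q.2) hx hy) (hdiam Q)
    simpa using h1
  | @cons Q Q₁ Q₂ h p ih =>
    intro x hx y hy
    obtain ⟨z, hz1, hz2⟩ := (h : Q ≠ Q₁ ∧ (Q.val ∩ Q₁.val).Nonempty).2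
    have h1 : dist x z ≤ D / 3 :=
      le_trans (Metric.dist_le_diam_of_mem (hbdd _ Q.2) hx hz1) (hdiam Q)
    have h2 : dist z y ≤ D / 3 * (p.length + 1) := ih z hz2 y hy
    calc dist x y ≤ dist x z + dist z y := dist_triangle x z y
      _ ≤ D / 3 + D / 3 * (p.length + 1) := add_le_add h1 h2
      _ = D / 3 * ((SimpleGraph.Walk.cons h p).length + 1) := by
          rw [SimpleGraph.Walk.length_cons]; push_cast; ring

/-- Milnor–Švarc-type lemma. Let `(X,d)` be a `C`-roughly geodesic space, `𝒬` a cover of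
`X` by nonempty subsets, `D = 3·sup_{Q∈𝒬} diam Q` with `C < D < ∞`, and suppose any two
members of `𝒬` containing points at distance `< D` are at graph distance `≤ N` in the
intersection graph. If `f : X → 𝒬` satisfies `x ∈ f(x)`, then `f` is a quasi-isometry:
`d(x,y) ≤ (2D/3)·d_𝒬(f x, f y)` whenever `f x ≠ f y`, and
`d_𝒬(f x, f y) ≤ N·(d(x,y)/(D−C) + 1)`. -/
theorem stmt_13 {X : Type*} [MetricSpace X] (C : ℝ) (hC : 0 ≤ C)
    (hgeod : ∀ x y : X, ∃ ξ : ℝ → X, IsRoughGeodBetween C ξ x y)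
    (𝒬 : Set (Set X)) (hne : ∀ Q ∈ 𝒬, Q.Nonempty) (hQcover : ⋃₀ 𝒬 = Set.univ)
    (hbdd : ∀ Q ∈ 𝒬, Bornology.IsBounded Q) (hbdd2 : BddAbove (Metric.diam '' 𝒬))
    (D : ℝ) (hD : D = 3 * sSup (Metric.diam '' 𝒬)) (hCD : C < D)
    (N : ℕ)
    (hN : ∀ x y : X, dist x y < D → ∀ Q Q' : {Q // Q ∈ 𝒬}, x ∈ Q.val → y ∈ Q'.val →
      (coverGraph 𝒬).Reachable Q Q' ∧ (coverGraph 𝒬).dist Q Q' ≤ N)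
    (f : X → {Q // Q ∈ 𝒬}) (hf : ∀ x : X, x ∈ (f x).val) :
    ∀ x y : X,
      (f x ≠ f y → dist x y ≤ (2 * D / 3) * ((coverGraph 𝒬).dist (f x) (f y) : ℝ)) ∧
      ((coverGraph 𝒬).dist (f x) (f y) : ℝ) ≤ N * (dist x y / (D - C) + 1) := by
  intro x y
  have hD0 : 0 < D := lt_of_le_of_lt hC hCD
  have hDC : 0 < D - C := by linarith
  have hd0 : (0 : ℝ) ≤ dist x y := dist_nonneg
  obtain ⟨ξ, hξ0, hξd, hξ⟩ := hgeod x y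
  set n : ℕ := ⌊dist x y / (D - C)⌋₊ + 1 with hn
  have hn0 : 0 < n := Nat.succ_pos _
  have hnR : (n : ℝ) ≤ dist x y / (D - C) + 1 := by
    have := Nat.floor_le (div_nonneg hd0 hDC.le)
    push_cast [hn]
    linarith
  have hdn : dist x y < n * (D - C) := by
    have h1 : dist x y / (D - C) < (n : ℝ) := by
      have := Nat.lt_floor_add_one (dist x y / (D - C))
      push_cast [hn]
      linarith
    calc dist x y = dist x y / (D - C) * (D - C) := by field_simp
      _ < n * (D - C) := by exact mul_lt_mul_of_pos_right h1 hDC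
  set g : ℕ → {Q // Q ∈ 𝒬} :=
    fun i => f (ξ ((min i n : ℕ) * dist x y / n)) with hg
  have htmem : ∀ i ≤ n, ((i : ℝ) * dist x y / n) ∈ Set.Icc (0 : ℝ) (dist x y) := by
    intro i hi
    constructor
    · positivity
    · rw [div_le_iff₀ (by exact_mod_cast hn0)]
      have : (i : ℝ) ≤ n := by exact_mod_cast hi
      nlinarith
  have hstep : ∀ i < n, (coverGraph 𝒬).Reachable (g i) (g (i+1)) ∧
      (coverGraph 𝒬).dist (g i) (g (i+1)) ≤ N := by
    intro i hi
    have hmi : min i n = i := min_eq_left hi.le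
    have hmi1 : min (i+1) n = i + 1 := min_eq_left hi
    have hmem1 := htmem i hi.le
    have hmem2 := htmem (i+1) hi
    have hnn : (0:ℝ) < n := by exact_mod_cast hn0
    have hdist : dist (ξ ((i : ℝ) * dist x y / n)) (ξ (((i+1 : ℕ) : ℝ) * dist x y / n)) < D := by
      have hle := (hξ _ hmem1 _ hmem2).2
      have habs : |(i : ℝ) * dist x y / n - ((i+1 : ℕ) : ℝ) * dist x y / n|
          = dist x y / n := by
        have heq : (i : ℝ) * dist x y / n - ((i+1 : ℕ) : ℝ) * dist x y / n
            = -(dist x y / n) := by push_cast; ring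
        rw [heq, abs_neg, abs_of_nonneg (by positivity)]
      have hlt : dist x y / n < D - C := by
        rw [div_lt_iff₀ hnn]
        linarith [hdn]
      rw [habs] at hle
      linarith
    simp only [hg, hmi, hmi1]
    exact hN _ _ hdist _ _ (hf _) (hf _)
  obtain ⟨hreach, hdistle⟩ := chain_dist (coverGraph 𝒬) g N n hstep
  have hg0 : g 0 = f x := by
    simp only [hg, Nat.cast_zero, min_eq_left (Nat.zero_le n)]
    norm_num [hξ0]
  have hgn : g n = f y := by
    have hne' : (n : ℝ) ≠ 0 := by exact_mod_cast hn0.ne'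
    simp only [hg, min_self]
    have heq : (n : ℝ) * dist x y / n = dist x y := by field_simp
    rw [heq, hξd]
  rw [hg0, hgn] at hreach hdistle
  constructor
  · intro hfxy
    have hpos : 0 < (coverGraph 𝒬).dist (f x) (f y) := hreach.pos_dist_of_ne hfxy
    obtain ⟨p, hp⟩ := hreach.exists_walk_length_eq_dist
    have := walk_dist 𝒬 hbdd hbdd2 D hD p x (hf x) y (hf y)
    rw [hp] at this
    have h1 : (1 : ℝ) ≤ ((coverGraph 𝒬).dist (f x) (f y) : ℝ) := by exact_mod_cast hpos
    nlinarith
  · have h1 : ((coverGraph 𝒬).dist (f x) (f y) : ℝ) ≤ (n : ℝ) * N := by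
      exact_mod_cast hdistle
    calc ((coverGraph 𝒬).dist (f x) (f y) : ℝ) ≤ (n : ℝ) * N := h1
      _ ≤ (dist x y / (D - C) + 1) * N := by
          apply mul_le_mul_of_nonneg_right hnR (by positivity)
      _ = N * (dist x y / (D - C) + 1) := by ring
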